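/- Let x̂ = x̂^{(∞)} be the componentwise limit of the modified coupled recursion and let S be the shift operator [Sx]_i = x_{i−1} (with x₀ = 0). Then the directional derivative of the coupled potential at x̂ in the direction Sx̂ − x̂ vanishes: U_c'(x̂)ᵀ (Sx̂ − x̂) = 0, where U_c'(x) denotes the gradient of U_c. -/

import Mathlib

open Set Filter

/-- The coupling matrix `A` of size `N × M` with `M = N + w − 1`. -/
noncomputable def Amat (w N : ℕ) (j : Fin N) (k : Fin (N + w - 1)) : ℝ :=
  if (j : ℕ) ≤ (k : ℕ) ∧ (k : ℕ) < (j : ℕ) + w then (w : ℝ)⁻¹ else 0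

/-- The coupled update `h(x) = Aᵀ f(A g(x))`. -/
noncomputable def coupledMap (w N : ℕ) (f g : ℝ → ℝ)
    (x : Fin (N + w - 1) → ℝ) : Fin (N + w - 1) → ℝ :=
  fun i => ∑ j : Fin N, Amat w N j i * f (∑ k, Amat w N j k * g (x k))

/-- The coupled potential `U_c(x) = g(x)ᵀx − G(x) − F(A g(x))`. -/
noncomputable def Uc (w N : ℕ) (f g : ℝ → ℝ) (x : Fin (N + w - 1) → ℝ) : ℝ :=
  (∑ i, (g (x i) * x i - ∫ z in (0:ℝ)..(x i), g z))
    - ∑ j : Fin N, ∫ z in (0:ℝ)..(∑ k, Amat w N j k * g (x k)), f z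

/-- The saturation map `q`. -/
noncomputable def qmap (M : ℕ) (x : Fin M → ℝ) : Fin M → ℝ :=
  fun i => if _h : (M + 1) / 2 ≤ (i : ℕ)
    then x ⟨(M + 1) / 2 - 1, by have := i.isLt; omega⟩ else x i

/-- The modified coupled recursion `x̂^{(ℓ+1)} = q(h(x̂^{(ℓ)}))`. -/
noncomputable def modSeq (w N : ℕ) (f g : ℝ → ℝ) (xmax : ℝ) :
    ℕ → Fin (N + w - 1) → ℝ
  | 0 => fun _ => xmax
  | ℓ + 1 => qmap _ (coupledMap w N f g (modSeq w N f g xmax ℓ))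

/-- The shift operator `S`: `[Sx]_i = x_{i−1}` with the convention `x₀ = 0`. -/
noncomputable def shiftS (M : ℕ) (x : Fin M → ℝ) : Fin M → ℝ :=
  fun i => if _h : (i : ℕ) = 0 then 0 else x ⟨(i : ℕ) - 1, by have := i.isLt; omega⟩

lemma Amat_nonneg (w N : ℕ) (j : Fin N) (k : Fin (N + w - 1)) : 0 ≤ Amat w N j k := by
  unfold Amat; split <;> positivity

lemma Amat_row_sum (w N : ℕ) (hw : 1 ≤ w) (j : Fin N) :
    ∑ k : Fin (N + w - 1), Amat w N j k = 1 := by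
  have h1 : ∑ k : Fin (N + w - 1), Amat w N j k
      = ∑ m ∈ Finset.range (N + w - 1),
          (if (j : ℕ) ≤ m ∧ m < (j : ℕ) + w then (w : ℝ)⁻¹ else 0) := by
    rw [Finset.sum_range fun m => _]; rfl
  rw [h1, ← Finset.sum_filter]
  have h2 : (Finset.range (N + w - 1)).filter
      (fun m => (j : ℕ) ≤ m ∧ m < (j : ℕ) + w) = Finset.Ico (j : ℕ) ((j : ℕ) + w) := by
    ext m
    simp only [Finset.mem_filter, Finset.mem_range, Finset.mem_Ico]
    have := j.isLt
    omega
  rw [h2, Finset.sum_const, Nat.card_Ico, nsmul_eq_mul]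
  have hw0 : (w : ℝ) ≠ 0 := by
    have : 0 < w := hw
    exact_mod_cast this.ne'
  field_simp
  rw [Nat.add_sub_cancel_left]

lemma Amat_col_sum_le (w N : ℕ) (hw : 1 ≤ w) (k : Fin (N + w - 1)) :
    ∑ j : Fin N, Amat w N j k ≤ 1 := by
  have h1 : ∑ j : Fin N, Amat w N j k
      = ∑ m ∈ Finset.range N,
          (if m ≤ (k : ℕ) ∧ (k : ℕ) < m + w then (w : ℝ)⁻¹ else 0) := by
    rw [Finset.sum_range fun m => _]; rfl
  rw [h1, ← Finset.sum_filter]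
  have h2 : (Finset.range N).filter (fun m => m ≤ (k : ℕ) ∧ (k : ℕ) < m + w)
      ⊆ Finset.Ico ((k : ℕ) + 1 - w) ((k : ℕ) + 1) := by
    intro m hm
    simp only [Finset.mem_filter, Finset.mem_range, Finset.mem_Ico] at hm ⊢
    omega
  have hw0 : (0:ℝ) < (w : ℝ) := by exact_mod_cast hw
  calc ∑ _m ∈ (Finset.range N).filter (fun m => m ≤ (k : ℕ) ∧ (k : ℕ) < m + w), (w : ℝ)⁻¹
      ≤ ∑ _m ∈ Finset.Ico ((k : ℕ) + 1 - w) ((k : ℕ) + 1), (w : ℝ)⁻¹ :=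
        Finset.sum_le_sum_of_subset_of_nonneg h2 (fun _ _ _ => by positivity)
    _ = ((((k : ℕ) + 1 - ((k : ℕ) + 1 - w) : ℕ) : ℝ)) * (w : ℝ)⁻¹ := by
        rw [Finset.sum_const, Nat.card_Ico, nsmul_eq_mul]
    _ ≤ (w : ℝ) * (w : ℝ)⁻¹ := by
        apply mul_le_mul_of_nonneg_right _ (by positivity)
        have h3 : ((k : ℕ) + 1) - ((k : ℕ) + 1 - w) ≤ w := by omega
        exact_mod_cast (Nat.cast_le (α := ℝ)).mpr h3
    _ = 1 := by field_simp

lemma sum_weighted_mem_Icc {ι : Type*} [Fintype ι] (wt v : ι → ℝ) {c : ℝ} (hc : 0 ≤ c)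
    (hw0 : ∀ i, 0 ≤ wt i) (hw1 : ∑ i, wt i ≤ 1) (hv : ∀ i, v i ∈ Icc 0 c) :
    ∑ i, wt i * v i ∈ Icc 0 c := by
  constructor
  · exact Finset.sum_nonneg fun i _ => mul_nonneg (hw0 i) (hv i).1
  · calc ∑ i, wt i * v i ≤ ∑ i, wt i * c :=
        Finset.sum_le_sum fun i _ => mul_le_mul_of_nonneg_left (hv i).2 (hw0 i)
    _ = (∑ i, wt i) * c := by rw [Finset.sum_mul]
    _ ≤ 1 * c := mul_le_mul_of_nonneg_right hw1 hc
    _ = c := one_mul c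

lemma mem_Icc_line {a b c t : ℝ} (ha : a ∈ Icc 0 c) (hb : b ∈ Icc 0 c)
    (ht : t ∈ Icc (0:ℝ) 1) : a + t * (b - a) ∈ Icc 0 c := by
  obtain ⟨ha0, ha1⟩ := ha; obtain ⟨hb0, hb1⟩ := hb; obtain ⟨ht0, ht1⟩ := ht
  constructor <;> nlinarith


/-- **Lemma (modified_scalar_fp_dir_deriv).** Let `x̂ = x̂^{(∞)}` be the limit of the
modified coupled recursion.  Then the directional derivative of the coupled potential
at `x̂` in the direction `Sx̂ − x̂` vanishes: `U_c'(x̂)ᵀ(Sx̂ − x̂) = 0`. -/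
theorem stmt_10
    (xmax ymax : ℝ) (hxmax : 0 < xmax) (hymax : 0 < ymax)
    (f g : ℝ → ℝ)
    (hf_maps : Set.MapsTo f (Set.Icc 0 ymax) (Set.Icc 0 xmax))
    (hf_mono : MonotoneOn f (Set.Icc 0 ymax))
    (hf_C1 : ContDiffOn ℝ 1 f (Set.Icc 0 ymax))
    (hg_maps : Set.MapsTo g (Set.Icc 0 xmax) (Set.Icc 0 ymax))
    (hg_strict : StrictMonoOn g (Set.Icc 0 xmax))
    (hg_C2 : ContDiffOn ℝ 2 g (Set.Icc 0 xmax))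
    (hg_top : g xmax = ymax)
    (w N : ℕ) (hw : 1 ≤ w) (hN : 1 ≤ N)
    (xhat : Fin (N + w - 1) → ℝ)
    (hlim : ∀ i, Tendsto (fun ℓ => modSeq w N f g xmax ℓ i) atTop (nhds (xhat i))) :
    fderiv ℝ (Uc w N f g) xhat (shiftS _ xhat - xhat) = 0 := by
  classical
  -- boxes
  have hy_box : ∀ x : Fin (N + w - 1) → ℝ, (∀ k, x k ∈ Icc 0 xmax) →
      ∀ j : Fin N, (∑ k, Amat w N j k * g (x k)) ∈ Icc 0 ymax := by
    intro x hx j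
    exact sum_weighted_mem_Icc (fun k => Amat w N j k) (fun k => g (x k)) hymax.le
      (fun k => Amat_nonneg w N j k) (Amat_row_sum w N hw j).le
      (fun k => hg_maps (hx k))
  have hcm_box : ∀ x : Fin (N + w - 1) → ℝ, (∀ k, x k ∈ Icc 0 xmax) →
      ∀ i, coupledMap w N f g x i ∈ Icc 0 xmax := by
    intro x hx i
    exact sum_weighted_mem_Icc (fun j => Amat w N j i)
      (fun j => f (∑ k, Amat w N j k * g (x k))) hxmax.le
      (fun j => Amat_nonneg w N j i) (Amat_col_sum_le w N hw i)
      (fun j => hf_maps (hy_box x hx j))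
  have hbox : ∀ ℓ i, modSeq w N f g xmax ℓ i ∈ Icc 0 xmax := by
    intro ℓ
    induction ℓ with
    | zero => intro i; exact ⟨hxmax.le, le_refl _⟩
    | succ ℓ ih =>
      intro i
      have hcm := hcm_box (modSeq w N f g xmax ℓ) ih
      show qmap _ (coupledMap w N f g (modSeq w N f g xmax ℓ)) i ∈ Icc 0 xmax
      unfold qmap
      split
      · exact hcm _
      · exact hcm _
  have hxhat_box : ∀ i, xhat i ∈ Icc 0 xmax :=
    fun i => isClosed_Icc.mem_of_tendsto (hlim i)
      (Eventually.of_forall fun ℓ => hbox ℓ i)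
  -- fixed point
  have hfix : ∀ i, xhat i = qmap _ (coupledMap w N f g xhat) i := by
    have hgt : ∀ k, Tendsto (fun ℓ => g (modSeq w N f g xmax ℓ k)) atTop (nhds (g (xhat k))) := by
      intro k
      have hcw : ContinuousWithinAt g (Icc 0 xmax) (xhat k) :=
        (hg_C2.continuousOn).continuousWithinAt (hxhat_box k)
      exact hcw.tendsto.comp (tendsto_nhdsWithin_iff.mpr
        ⟨hlim k, Eventually.of_forall fun ℓ => hbox ℓ k⟩)
    have hyt : ∀ j : Fin N, Tendsto (fun ℓ => ∑ k, Amat w N j k * g (modSeq w N f g xmax ℓ k))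
        atTop (nhds (∑ k, Amat w N j k * g (xhat k))) :=
      fun j => tendsto_finset_sum _ (fun k _ => (hgt k).const_mul _)
    have hft : ∀ j : Fin N, Tendsto
        (fun ℓ => f (∑ k, Amat w N j k * g (modSeq w N f g xmax ℓ k)))
        atTop (nhds (f (∑ k, Amat w N j k * g (xhat k)))) := by
      intro j
      have hcw : ContinuousWithinAt f (Icc 0 ymax) (∑ k, Amat w N j k * g (xhat k)) :=
        (hf_C1.continuousOn).continuousWithinAt (hy_box xhat hxhat_box j)
      exact hcw.tendsto.comp (tendsto_nhdsWithin_iff.mpr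
        ⟨hyt j, Eventually.of_forall fun ℓ => hy_box _ (hbox ℓ) j⟩)
    have hcmt : ∀ i, Tendsto (fun ℓ => coupledMap w N f g (modSeq w N f g xmax ℓ) i)
        atTop (nhds (coupledMap w N f g xhat i)) :=
      fun i => tendsto_finset_sum _ (fun j _ => (hft j).const_mul _)
    intro i
    refine tendsto_nhds_unique ((hlim i).comp (tendsto_add_atTop_nat 1)) ?_
    have heq : ∀ ℓ, modSeq w N f g xmax (ℓ + 1) i
        = qmap _ (coupledMap w N f g (modSeq w N f g xmax ℓ)) i := fun ℓ => rfl
    simp only [Function.comp_def, heq]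
    unfold qmap
    split
    · exact hcmt _
    · exact hcmt _
  -- key dichotomy
  set d : Fin (N + w - 1) → ℝ := shiftS _ xhat - xhat with hd_def
  have hkey : ∀ i : Fin (N + w - 1),
      d i = 0 ∨ coupledMap w N f g xhat i = xhat i := by
    intro i
    by_cases h : (N + w - 1 + 1) / 2 ≤ (i : ℕ)
    · left
      have hi0 : (i : ℕ) ≠ 0 := by omega
      have hxi : xhat i = coupledMap w N f g xhat
          ⟨(N + w - 1 + 1) / 2 - 1, by have := i.isLt; omega⟩ := by
        rw [hfix i]; unfold qmap; rw [dif_pos h]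
      have hxi1 : xhat ⟨(i : ℕ) - 1, by have := i.isLt; omega⟩
          = coupledMap w N f g xhat
            ⟨(N + w - 1 + 1) / 2 - 1, by have := i.isLt; omega⟩ := by
        by_cases h' : (N + w - 1 + 1) / 2 ≤ (i : ℕ) - 1
        · rw [hfix ⟨(i : ℕ) - 1, by have := i.isLt; omega⟩]
          unfold qmap
          rw [dif_pos h']
        · have hieq : (i : ℕ) - 1 = (N + w - 1 + 1) / 2 - 1 := by omega
          have : (⟨(i : ℕ) - 1, by have := i.isLt; omega⟩ : Fin (N + w - 1))
              = ⟨(N + w - 1 + 1) / 2 - 1, by have := i.isLt; omega⟩ := by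
            exact Fin.ext hieq
          rw [this, hfix ⟨(N + w - 1 + 1) / 2 - 1, by have := i.isLt; omega⟩]
          unfold qmap
          rw [dif_neg (show ¬ (N + w - 1 + 1) / 2 ≤ ((⟨(N + w - 1 + 1) / 2 - 1, by have := i.isLt; omega⟩ : Fin (N + w - 1)) : ℕ) by simp only [Fin.val_mk]; omega)]
      have hs : shiftS _ xhat i = xhat ⟨(i : ℕ) - 1, by have := i.isLt; omega⟩ := by
        unfold shiftS; rw [dif_neg hi0]
      have hsx : shiftS (N + w - 1) xhat i = xhat i := by rw [hs, hxi1, hxi]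
      show (shiftS (N + w - 1) xhat - xhat) i = 0
      simp [Pi.sub_apply, hsx]
    · right
      rw [hfix i]; unfold qmap; rw [dif_neg h]

  by_cases hdiff : DifferentiableAt ℝ (Uc w N f g) xhat
  case neg =>
    rw [fderiv_zero_of_not_differentiableAt hdiff]
    simp
  case pos =>
  have hd_mem : ∀ i, shiftS (N + w - 1) xhat i ∈ Icc 0 xmax := by
    intro i; unfold shiftS; split
    · exact ⟨le_refl _, hxmax.le⟩
    · exact hxhat_box _
  have hc_maps : ∀ i, MapsTo (fun t : ℝ => xhat i + t * d i) (Icc 0 1) (Icc 0 xmax) := by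
    intro i t ht
    have hdi : d i = shiftS (N + w - 1) xhat i - xhat i := by rw [hd_def]; rfl
    rw [hdi]
    exact mem_Icc_line (hxhat_box i) (hd_mem i) ht
  have hc_der : ∀ i, HasDerivAt (fun t : ℝ => xhat i + t * d i) (d i) 0 := by
    intro i
    simpa using ((hasDerivAt_id (0:ℝ)).mul_const (d i)).const_add (xhat i)
  have hc0 : ∀ i, xhat i + (0:ℝ) * d i = xhat i := by intro i; ring
  have hg_diff : ∀ i, HasDerivWithinAt g (derivWithin g (Icc 0 xmax) (xhat i))
      (Icc 0 xmax) (xhat i) :=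
    fun i => ((hg_C2.differentiableOn (by norm_num)) (xhat i) (hxhat_box i)).hasDerivWithinAt
  set gd : Fin (N + w - 1) → ℝ := fun i => derivWithin g (Icc 0 xmax) (xhat i) with hgd_def
  have hgc_der : ∀ i, HasDerivWithinAt (fun t : ℝ => g (xhat i + t * d i)) (gd i * d i)
      (Icc 0 1) 0 := by
    intro i
    have h1 : HasDerivWithinAt g (gd i) (Icc 0 xmax) ((fun t : ℝ => xhat i + t * d i) 0) := by
      show HasDerivWithinAt g (gd i) (Icc 0 xmax) (xhat i + (0:ℝ) * d i)
      rw [hc0 i]; exact hg_diff i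
    exact HasDerivWithinAt.comp 0 h1 ((hc_der i).hasDerivWithinAt) (hc_maps i)
  -- continuous extensions
  set gext : ℝ → ℝ := fun z => g (max 0 (min z xmax)) with hgext_def
  set fext : ℝ → ℝ := fun z => f (max 0 (min z ymax)) with hfext_def
  have hgext_cont : Continuous gext :=
    (hg_C2.continuousOn).comp_continuous
      (continuous_const.max (continuous_id.min continuous_const))
      (fun z => ⟨le_max_left _ _, max_le hxmax.le (min_le_right _ _)⟩)
  have hfext_cont : Continuous fext :=
    (hf_C1.continuousOn).comp_continuous
      (continuous_const.max (continuous_id.min continuous_const))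
      (fun z => ⟨le_max_left _ _, max_le hymax.le (min_le_right _ _)⟩)
  have hgext_eq : ∀ z ∈ Icc (0:ℝ) xmax, gext z = g z := by
    intro z hz
    show g (max 0 (min z xmax)) = g z
    rw [min_eq_left hz.2, max_eq_right hz.1]
  have hfext_eq : ∀ z ∈ Icc (0:ℝ) ymax, fext z = f z := by
    intro z hz
    show f (max 0 (min z ymax)) = f z
    rw [min_eq_left hz.2, max_eq_right hz.1]
  have hint_g : ∀ x ∈ Icc (0:ℝ) xmax,
      (∫ z in (0:ℝ)..x, g z) = ∫ z in (0:ℝ)..x, gext z := by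
    intro x hx
    apply intervalIntegral.integral_congr
    intro z hz
    rw [uIcc_of_le hx.1] at hz
    exact (hgext_eq z ⟨hz.1, hz.2.trans hx.2⟩).symm
  have hint_f : ∀ x ∈ Icc (0:ℝ) ymax,
      (∫ z in (0:ℝ)..x, f z) = ∫ z in (0:ℝ)..x, fext z := by
    intro x hx
    apply intervalIntegral.integral_congr
    intro z hz
    rw [uIcc_of_le hx.1] at hz
    exact (hfext_eq z ⟨hz.1, hz.2.trans hx.2⟩).symm
  have hIg : ∀ b : ℝ, HasDerivAt (fun u => ∫ z in (0:ℝ)..u, gext z) (gext b) b :=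
    fun b => (hgext_cont.integral_hasStrictDerivAt 0 b).hasDerivAt
  have hIf : ∀ b : ℝ, HasDerivAt (fun u => ∫ z in (0:ℝ)..u, fext z) (fext b) b :=
    fun b => (hfext_cont.integral_hasStrictDerivAt 0 b).hasDerivAt
  have h0mem : (0:ℝ) ∈ Icc (0:ℝ) 1 := left_mem_Icc.mpr zero_le_one
  -- term 1
  have hterm1 : ∀ i, HasDerivWithinAt
      (fun t : ℝ => g (xhat i + t * d i) * (xhat i + t * d i))
      (gd i * d i * xhat i + g (xhat i) * d i) (Icc 0 1) 0 := by
    intro i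
    have h := (hgc_der i).mul ((hc_der i).hasDerivWithinAt (s := Icc 0 1))
    rw [hc0 i] at h
    exact h
  -- term 2
  have hterm2 : ∀ i, HasDerivWithinAt
      (fun t : ℝ => ∫ z in (0:ℝ)..(xhat i + t * d i), g z)
      (g (xhat i) * d i) (Icc 0 1) 0 := by
    intro i
    have h1 : HasDerivAt (fun u => ∫ z in (0:ℝ)..u, gext z) (gext (xhat i))
        ((fun t : ℝ => xhat i + t * d i) 0) := by
      show HasDerivAt _ _ (xhat i + (0:ℝ) * d i)
      rw [hc0 i]; exact hIg (xhat i)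
    have h2 := h1.comp_hasDerivWithinAt 0 ((hc_der i).hasDerivWithinAt (s := Icc 0 1))
    rw [hgext_eq _ (hxhat_box i)] at h2
    refine h2.congr ?_ ?_
    · intro t ht; exact hint_g _ (hc_maps i ht)
    · exact hint_g _ (hc_maps i h0mem)
  -- term 3
  have hY_der : ∀ j : Fin N, HasDerivWithinAt
      (fun t : ℝ => ∑ k, Amat w N j k * g (xhat k + t * d k))
      (∑ k, Amat w N j k * (gd k * d k)) (Icc 0 1) 0 :=
    fun j => HasDerivWithinAt.fun_sum (fun k _ => (hgc_der k).const_mul _)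
  have hY_maps : ∀ j : Fin N, MapsTo
      (fun t : ℝ => ∑ k, Amat w N j k * g (xhat k + t * d k)) (Icc 0 1) (Icc 0 ymax) :=
    fun j t ht => hy_box (fun k => xhat k + t * d k) (fun k => hc_maps k ht) j
  have hY0 : ∀ j : Fin N, (∑ k, Amat w N j k * g (xhat k + (0:ℝ) * d k))
      = ∑ k, Amat w N j k * g (xhat k) := by
    intro j
    apply Finset.sum_congr rfl
    intro k _
    rw [hc0 k]
  have hterm3 : ∀ j : Fin N, HasDerivWithinAt
      (fun t : ℝ => ∫ z in (0:ℝ)..(∑ k, Amat w N j k * g (xhat k + t * d k)), f z)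
      (f (∑ k, Amat w N j k * g (xhat k)) * (∑ k, Amat w N j k * (gd k * d k)))
      (Icc 0 1) 0 := by
    intro j
    have h1 : HasDerivAt (fun u => ∫ z in (0:ℝ)..u, fext z)
        (fext (∑ k, Amat w N j k * g (xhat k)))
        ((fun t : ℝ => ∑ k, Amat w N j k * g (xhat k + t * d k)) 0) := by
      show HasDerivAt _ _ (∑ k, Amat w N j k * g (xhat k + (0:ℝ) * d k))
      rw [hY0 j]; exact hIf _
    have h2 := h1.comp_hasDerivWithinAt 0 (hY_der j)
    rw [hfext_eq _ (hy_box xhat hxhat_box j)] at h2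
    refine h2.congr ?_ ?_
    · intro t ht; exact hint_f _ (hY_maps j ht)
    · exact hint_f _ (hY_maps j h0mem)
  -- assemble
  have hsum : HasDerivWithinAt (fun t : ℝ => Uc w N f g (xhat + t • d))
      ((∑ i, (gd i * d i * xhat i + g (xhat i) * d i - g (xhat i) * d i))
        - ∑ j : Fin N, f (∑ k, Amat w N j k * g (xhat k))
            * (∑ k, Amat w N j k * (gd k * d k)))
      (Icc 0 1) 0 := by
    have h := (HasDerivWithinAt.fun_sum
        (fun i (_ : i ∈ Finset.univ) => (hterm1 i).sub (hterm2 i))).sub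
      (HasDerivWithinAt.fun_sum (fun j (_ : j ∈ Finset.univ) => hterm3 j))
    have hfun : (fun t : ℝ => Uc w N f g (xhat + t • d))
        = fun t : ℝ => (∑ i, (g (xhat i + t * d i) * (xhat i + t * d i)
            - ∫ z in (0:ℝ)..(xhat i + t * d i), g z))
          - ∑ j : Fin N, ∫ z in (0:ℝ)..(∑ k, Amat w N j k * g (xhat k + t * d k)), f z := by
      funext t
      simp only [Uc, Pi.add_apply, Pi.smul_apply, smul_eq_mul]
    rw [hfun]
    exact h
  -- chain rule
  have hL : HasDerivAt (fun t : ℝ => xhat + t • d) d 0 := by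
    simpa using ((hasDerivAt_id (0:ℝ)).smul_const d).const_add xhat
  have hUd : HasDerivAt (fun t : ℝ => Uc w N f g (xhat + t • d))
      (fderiv ℝ (Uc w N f g) xhat d) 0 := by
    have h0 : HasFDerivAt (Uc w N f g) (fderiv ℝ (Uc w N f g) xhat)
        ((fun t : ℝ => xhat + t • d) 0) := by
      show HasFDerivAt _ _ (xhat + (0:ℝ) • d)
      rw [show xhat + (0:ℝ) • d = xhat by simp]
      exact hdiff.hasFDerivAt
    exact h0.comp_hasDerivAt 0 hL
  have hu : UniqueDiffWithinAt ℝ (Icc (0:ℝ) 1) 0 :=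
    uniqueDiffOn_Icc zero_lt_one 0 h0mem
  have heq : fderiv ℝ (Uc w N f g) xhat d
      = (∑ i, (gd i * d i * xhat i + g (xhat i) * d i - g (xhat i) * d i))
        - ∑ j : Fin N, f (∑ k, Amat w N j k * g (xhat k))
            * (∑ k, Amat w N j k * (gd k * d k)) :=
    ((hUd.hasDerivWithinAt (s := Icc (0:ℝ) 1)).derivWithin hu).symm.trans
      (hsum.derivWithin hu)
  rw [heq]
  -- show the value is zero
  have hswap : ∑ j : Fin N, f (∑ k, Amat w N j k * g (xhat k))
        * (∑ k, Amat w N j k * (gd k * d k))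
      = ∑ i, coupledMap w N f g xhat i * (gd i * d i) := by
    simp only [Finset.mul_sum]
    rw [Finset.sum_comm]
    apply Finset.sum_congr rfl
    intro k _
    show _ = coupledMap w N f g xhat k * (gd k * d k)
    unfold coupledMap
    rw [Finset.sum_mul]
    apply Finset.sum_congr rfl
    intro j _
    ring
  have hcancel : ∀ i : Fin (N + w - 1),
      gd i * d i * xhat i + g (xhat i) * d i - g (xhat i) * d i
        = gd i * d i * xhat i := by
    intro i; ring
  simp only [hcancel]
  rw [hswap, ← Finset.sum_sub_distrib]
  apply Finset.sum_eq_zero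
  intro i _
  rcases hkey i with h | h
  · rw [h]; ring
  · rw [h]; ring
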